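/- In the three-party scenario where clone 2 and the ancilla are measured in the computational basis, the conditional (unnormalized) state of clone 1 after outcomes (clone2, ancilla) = (0,1) is √(2/3) α|0⟩ + (1/√6) β|1⟩, and after (1,0) it is −(1/√6) α|0⟩ − √(2/3) β|1⟩. Applying the filter with successful Kraus operator A_F = (1/2)|0⟩⟨0| + |1⟩⟨1| in the first case (respectively A_F = −|0⟩⟨0| − (1/2)|1⟩⟨1| in the second) yields, upon success, the state |φ⟩ = α|0⟩+β|1⟩ exactly; the total success probability, summed over both outcome branches, is 1/3, independent of α, β. -/
import Mathlib


open scoped ComplexConjugate ComplexOrder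
open Finset Matrix

noncomputable section

/-- Index set for three qubits: (clone 1, clone 2, ancilla). -/
abbrev I3 := Fin 2 × Fin 2 × Fin 2

/-- Image of |0⟩|00⟩ under the universal 1→2 cloner:
    √(2/3)|00⟩|1⟩ − (1/√6)(|01⟩+|10⟩)|0⟩. -/
def out0 : I3 → ℂ := fun p =>
  if p = (0, 0, 1) then ((Real.sqrt (2/3) : ℝ) : ℂ)
  else if p = (0, 1, 0) then -(((1 / Real.sqrt 6 : ℝ)) : ℂ)
  else if p = (1, 0, 0) then -(((1 / Real.sqrt 6 : ℝ)) : ℂ)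
  else 0

/-- Image of |1⟩|00⟩ under the universal 1→2 cloner:
    −√(2/3)|11⟩|0⟩ + (1/√6)(|10⟩+|01⟩)|1⟩. -/
def out1 : I3 → ℂ := fun p =>
  if p = (1, 1, 0) then -((Real.sqrt (2/3) : ℝ) : ℂ)
  else if p = (1, 0, 1) then (((1 / Real.sqrt 6 : ℝ)) : ℂ)
  else if p = (0, 1, 1) then (((1 / Real.sqrt 6 : ℝ)) : ℂ)
  else 0

/-- Output of the cloner on input α|0⟩+β|1⟩. -/
def cloneOut (α β : ℂ) : I3 → ℂ := fun p => α * out0 p + β * out1 p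

/-- Output density matrix U(|φ⟩⟨φ| ⊗ |00⟩⟨00|)U†. -/
def rhoOut (α β : ℂ) : Matrix I3 I3 ℂ :=
  Matrix.of fun p q => cloneOut α β p * conj (cloneOut α β q)

/-- Reduced state of the first clone. -/
def rhoC (α β : ℂ) : Matrix (Fin 2) (Fin 2) ℂ :=
  Matrix.of fun i j => ∑ b : Fin 2, ∑ c : Fin 2, rhoOut α β (i, b, c) (j, b, c)

/-- Reduced state of the ancilla. -/
def rhoA (α β : ℂ) : Matrix (Fin 2) (Fin 2) ℂ :=
  Matrix.of fun i j => ∑ a : Fin 2, ∑ b : Fin 2, rhoOut α β (a, b, i) (a, b, j)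

/-- Reduced state of the two clones. -/
def rhoCC (α β : ℂ) : Matrix (Fin 2 × Fin 2) (Fin 2 × Fin 2) ℂ :=
  Matrix.of fun p q => ∑ c : Fin 2, rhoOut α β (p.1, p.2, c) (q.1, q.2, c)

def σx : Matrix (Fin 2) (Fin 2) ℂ := !![0, 1; 1, 0]
def σy : Matrix (Fin 2) (Fin 2) ℂ := !![0, -Complex.I; Complex.I, 0]
def σz : Matrix (Fin 2) (Fin 2) ℂ := !![1, 0; 0, -1]

/-- s·σ for a real 3-vector s. -/
def pauliDot (s : Fin 3 → ℝ) : Matrix (Fin 2) (Fin 2) ℂ :=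
  ((s 0 : ℝ) : ℂ) • σx + ((s 1 : ℝ) : ℂ) • σy + ((s 2 : ℝ) : ℂ) • σz

/-- (1/2)(I + s·σ), the state with Bloch vector s. -/
def blochMat (s : Fin 3 → ℝ) : Matrix (Fin 2) (Fin 2) ℂ :=
  (1/2 : ℂ) • (1 + pauliDot s)

def φvec (α β : ℂ) : Fin 2 → ℂ := ![α, β]

/-- Outer product |v⟩⟨v| on a qubit. -/
def outer (v : Fin 2 → ℂ) : Matrix (Fin 2) (Fin 2) ℂ :=
  Matrix.of fun i j => v i * conj (v j)

/-- The images U(|i⟩|00⟩) of the two input basis states. -/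
def Uout : Fin 2 → I3 → ℂ := ![out0, out1]

/-- Effective operator on the input qubit corresponding to an operator F on the output:
    E i j = ⟨U(|i⟩|00⟩)| F |U(|j⟩|00⟩)⟩ = (⟨00|_{ba} U† F U |00⟩_{ba}) i j. -/
def effOf (F : Matrix I3 I3 ℂ) : Matrix (Fin 2) (Fin 2) ℂ :=
  Matrix.of fun i j => ∑ p : I3, ∑ q : I3, conj (Uout i p) * F p q * Uout j q

/-- F ⊗ I ⊗ I: a measurement on the first clone only. -/
def extC (F : Matrix (Fin 2) (Fin 2) ℂ) : Matrix I3 I3 ℂ :=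
  Matrix.of fun p q => F p.1 q.1 * (if p.2 = q.2 then 1 else 0)

/-- I ⊗ I ⊗ F: a measurement on the ancilla only. -/
def extA (F : Matrix (Fin 2) (Fin 2) ℂ) : Matrix I3 I3 ℂ :=
  Matrix.of fun p q => (if (p.1, p.2.1) = (q.1, q.2.1) then 1 else 0) * F p.2.2 q.2.2

/-- F ⊗ I_ancilla: a measurement on the two clones. -/
def extCC (F : Matrix (Fin 2 × Fin 2) (Fin 2 × Fin 2) ℂ) : Matrix I3 I3 ℂ :=
  Matrix.of fun p q => F (p.1, p.2.1) (q.1, q.2.1) * (if p.2.2 = q.2.2 then 1 else 0)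

/-- Bell basis on two qubits, in the order φ⁺, ψ⁺, φ⁻, ψ⁻. -/
def bell : Fin 4 → (Fin 2 × Fin 2) → ℂ :=
  ![fun p => if p = (0,0) then ((1 / Real.sqrt 2 : ℝ) : ℂ)
             else if p = (1,1) then ((1 / Real.sqrt 2 : ℝ) : ℂ) else 0,
    fun p => if p = (0,1) then ((1 / Real.sqrt 2 : ℝ) : ℂ)
             else if p = (1,0) then ((1 / Real.sqrt 2 : ℝ) : ℂ) else 0,
    fun p => if p = (0,0) then ((1 / Real.sqrt 2 : ℝ) : ℂ)
             else if p = (1,1) then -((1 / Real.sqrt 2 : ℝ) : ℂ) else 0,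
    fun p => if p = (0,1) then ((1 / Real.sqrt 2 : ℝ) : ℂ)
             else if p = (1,0) then -((1 / Real.sqrt 2 : ℝ) : ℂ) else 0]

/-- Kronecker product of two single-qubit matrices. -/
def kron2 (A B : Matrix (Fin 2) (Fin 2) ℂ) : Matrix (Fin 2 × Fin 2) (Fin 2 × Fin 2) ℂ :=
  Matrix.of fun p q => A p.1 q.1 * B p.2 q.2

/-- Projector onto the symmetric subspace of two qubits: I − |ψ⁻⟩⟨ψ⁻|. -/
def symProj : Matrix (Fin 2 × Fin 2) (Fin 2 × Fin 2) ℂ :=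
  1 - Matrix.of fun p q => bell 3 p * conj (bell 3 q)

/-- Projector onto the antisymmetric subspace: |ψ⁻⟩⟨ψ⁻|. -/
def antiProj : Matrix (Fin 2 × Fin 2) (Fin 2 × Fin 2) ℂ :=
  Matrix.of fun p q => bell 3 p * conj (bell 3 q)

/-- Computational basis vector |abc⟩ of three qubits. -/
def e3 (a b c : Fin 2) : I3 → ℂ := fun p => if p = (a, b, c) then 1 else 0

/-- ∑ₚ conj(v p) w p, the inner product on three qubits. -/
def inner3 (v w : I3 → ℂ) : ℂ := ∑ p : I3, conj (v p) * w p

/-- Unnormalized conditional state of clone 1 after computational outcomes (b,c) on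
clone 2 and the ancilla. -/
def condC1 (α β : ℂ) (b c : Fin 2) : Fin 2 → ℂ := fun i => cloneOut α β (i, b, c)

/-- after outcomes (0,1) resp. (1,0) on (clone 2, ancilla) the conditional
clone-1 states are √(2/3)α|0⟩+(1/√6)β|1⟩ and −(1/√6)α|0⟩−√(2/3)β|1⟩; the filters
A_F = (1/2)|0⟩⟨0|+|1⟩⟨1| resp. A_F = −|0⟩⟨0|−(1/2)|1⟩⟨1| upon success yield |φ⟩ exactly,
with total success probability 1/3, independent of α, β. -/
theorem probabilistic_restoration_clone (α β : ℂ)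
    (hnorm : Complex.normSq α + Complex.normSq β = 1) :
    condC1 α β 0 1 = ![((Real.sqrt (2/3) : ℝ) : ℂ) * α, ((1 / Real.sqrt 6 : ℝ) : ℂ) * β] ∧
    condC1 α β 1 0 = ![-(((1 / Real.sqrt 6 : ℝ) : ℂ)) * α, -(((Real.sqrt (2/3) : ℝ) : ℂ)) * β] ∧
    (!![(1/2 : ℂ), 0; 0, 1]).mulVec (condC1 α β 0 1) =
      ((1 / Real.sqrt 6 : ℝ) : ℂ) • φvec α β ∧
    (!![(-1 : ℂ), 0; 0, -(1/2)]).mulVec (condC1 α β 1 0) =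
      ((1 / Real.sqrt 6 : ℝ) : ℂ) • φvec α β ∧
    (∑ i : Fin 2, Complex.normSq ((!![(1/2 : ℂ), 0; 0, 1]).mulVec (condC1 α β 0 1) i)) +
      (∑ i : Fin 2, Complex.normSq ((!![(-1 : ℂ), 0; 0, -(1/2)]).mulVec (condC1 α β 1 0) i))
      = 1/3 := by
  have hs6 : (0:ℝ) < Real.sqrt 6 := Real.sqrt_pos.2 (by norm_num)
  have hkey : Real.sqrt (2/3) = 2 / Real.sqrt 6 := by
    rw [show (2/3 : ℝ) = 4 / 6 by norm_num, Real.sqrt_div (by norm_num),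
      show (4:ℝ) = 2^2 by norm_num, Real.sqrt_sq (by norm_num)]
  have h1 : condC1 α β 0 1 = ![((Real.sqrt (2/3) : ℝ) : ℂ) * α, ((1 / Real.sqrt 6 : ℝ) : ℂ) * β] := by
    funext i
    fin_cases i <;> simp [condC1, cloneOut, out0, out1, Prod.ext_iff, mul_comm]
  have h2 : condC1 α β 1 0 = ![-(((1 / Real.sqrt 6 : ℝ) : ℂ)) * α, -(((Real.sqrt (2/3) : ℝ) : ℂ)) * β] := by
    funext i
    fin_cases i <;> simp [condC1, cloneOut, out0, out1, Prod.ext_iff, mul_comm]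
  have hhalf : (1/2 : ℂ) * ((Real.sqrt (2/3) : ℝ) : ℂ) = ((1 / Real.sqrt 6 : ℝ) : ℂ) := by
    rw [hkey]
    push_cast
    field_simp
  have h3 : (!![(1/2 : ℂ), 0; 0, 1]).mulVec (condC1 α β 0 1) =
      ((1 / Real.sqrt 6 : ℝ) : ℂ) • φvec α β := by
    rw [h1]; funext i
    fin_cases i <;>
      simp only [Matrix.mulVec, dotProduct, φvec, Fin.sum_univ_two, Fin.isValue,
        Fin.mk_zero, Fin.mk_one, Matrix.of_apply, Matrix.cons_val_zero, Matrix.cons_val_one, Matrix.head_cons, Matrix.cons_val',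
        Matrix.empty_val', Matrix.cons_val_fin_one, Matrix.head_fin_const, Pi.smul_apply,
        smul_eq_mul, zero_mul, mul_zero, add_zero, zero_add, one_mul, ← mul_assoc, hhalf]
  have h4 : (!![(-1 : ℂ), 0; 0, -(1/2)]).mulVec (condC1 α β 1 0) =
      ((1 / Real.sqrt 6 : ℝ) : ℂ) • φvec α β := by
    rw [h2]; funext i
    fin_cases i <;>
      simp only [Matrix.mulVec, dotProduct, φvec, Fin.sum_univ_two, Fin.isValue,
        Fin.mk_zero, Fin.mk_one, Matrix.of_apply, Matrix.cons_val_zero, Matrix.cons_val_one, Matrix.head_cons, Matrix.cons_val',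
        Matrix.empty_val', Matrix.cons_val_fin_one, Matrix.head_fin_const, Pi.smul_apply,
        smul_eq_mul, zero_mul, mul_zero, add_zero, zero_add, one_mul, neg_mul, mul_neg,
        neg_neg, ← mul_assoc, hhalf, neg_zero]
  refine ⟨h1, h2, h3, h4, ?_⟩
  rw [h3, h4]
  have hns : Complex.normSq ((1 / Real.sqrt 6 : ℝ) : ℂ) = 1/6 := by
    rw [Complex.normSq_ofReal]
    rw [div_mul_div_comm, one_mul, Real.mul_self_sqrt (by norm_num)]
  simp only [Pi.smul_apply, smul_eq_mul, Complex.normSq_mul, φvec, hns,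
    Fin.sum_univ_two, Matrix.cons_val_zero, Matrix.cons_val_one, Matrix.head_cons]
  ring_nf
  nlinarith [hnorm]
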